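/- arXiv:1609.09423 — 3 statements merged into one kernel-verified Lean document; each statement's English description precedes it below -/
import Mathlib

section
/- For every set Γ ⊂ 𝒫¹(S), μ_UI(Γ) ≤ μ_{H,W}(Γ), i.e. the measure of non-uniform integrability of Γ is at most the relative Hausdorff measure of non-compactness of Γ for the Wasserstein metric. -/
open MeasureTheory Filter

/-- The Wasserstein metric via Kantorovich duality. -/
noncomputable def W {S : Type*} [MetricSpace S] [MeasurableSpace S]
    (P Q : Measure S) : ℝ :=
  sSup {r : ℝ | ∃ f : S → ℝ, LipschitzWith 1 f ∧ r = |(∫ x, f x ∂P) - ∫ x, f x ∂Q|}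

/-- `𝒫¹(S)`: Borel probability measures on `S` with finite first moment. -/
def P1 (S : Type*) [MetricSpace S] [MeasurableSpace S] : Set (Measure S) :=
  {P | IsProbabilityMeasure P ∧ ∀ a : S, Integrable (fun x => dist a x) P}

/-- The relative Hausdorff measure of non-compactness for the Wasserstein metric:
`μ_{H,W}(Γ) = inf_{Φ ⊆ 𝒫¹(S) finite nonempty} sup_{P ∈ Γ} inf_{Q ∈ Φ} W(P,Q)`. -/
noncomputable def muHW {S : Type*} [MetricSpace S] [MeasurableSpace S]
    (Γ : Set (Measure S)) : ℝ :=
  sInf {r : ℝ | ∃ Φ : Finset (Measure S), Φ.Nonempty ∧ ↑Φ ⊆ P1 S ∧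
    r = sSup {s : ℝ | ∃ P ∈ Γ, s = sInf {t : ℝ | ∃ Q ∈ Φ, t = W P Q}}}

/-- The measure of non-uniform integrability:
`μ_UI(Γ) = inf_{a ∈ S} inf_{B ⊆ S bounded} sup_{P ∈ Γ} ∫_{S∖B} d(a,·) dP`. -/
noncomputable def muUI {S : Type*} [MetricSpace S] [MeasurableSpace S]
    (Γ : Set (Measure S)) : ℝ :=
  sInf {r : ℝ | ∃ a : S, ∃ B : Set S, Bornology.IsBounded B ∧
    r = sSup {s : ℝ | ∃ P ∈ Γ, s = ∫ x in Bᶜ, dist a x ∂P}}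

section Helpers

variable {S : Type*} [MetricSpace S] [MeasurableSpace S] [BorelSpace S]

lemma P1.lip_integrable {f : S → ℝ} (hf : LipschitzWith 1 f) {P : Measure S}
    (hP : P ∈ P1 S) : Integrable f P := by
  rcases isEmpty_or_nonempty S with h | h
  · rw [P.eq_zero_of_isEmpty]; exact integrable_zero_measure
  · obtain ⟨a⟩ := h
    have : IsProbabilityMeasure P := hP.1
    refine Integrable.mono' ((integrable_const |f a|).add (hP.2 a))
      hf.continuous.aestronglyMeasurable ?_
    filter_upwards with x
    rw [Real.norm_eq_abs]
    have h1 : |f x - f a| ≤ dist a x := by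
      have := hf.dist_le_mul x a
      rw [NNReal.coe_one, one_mul, Real.dist_eq, dist_comm] at this
      exact this
    calc |f x| = |f a + (f x - f a)| := by ring_nf
      _ ≤ |f a| + |f x - f a| := abs_add_le _ _
      _ ≤ |f a| + dist a x := by linarith

lemma abs_integral_sub_le_moments (a : S) {f : S → ℝ} (hf : LipschitzWith 1 f)
    {P Q : Measure S} (hP : P ∈ P1 S) (hQ : Q ∈ P1 S) :
    |(∫ x, f x ∂P) - ∫ x, f x ∂Q| ≤ (∫ x, dist a x ∂P) + ∫ x, dist a x ∂Q := by
  have key : ∀ μ : Measure S, μ ∈ P1 S → |(∫ x, f x ∂μ) - f a| ≤ ∫ x, dist a x ∂μ := by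
    intro μ hμ
    have : IsProbabilityMeasure μ := hμ.1
    have h1 : (∫ x, f x ∂μ) - f a = ∫ x, (f x - f a) ∂μ := by
      rw [integral_sub (P1.lip_integrable hf hμ) (integrable_const _), integral_const,
        probReal_univ, one_smul]
    rw [h1]
    calc |∫ x, (f x - f a) ∂μ| ≤ ∫ x, |f x - f a| ∂μ := by
          simpa [Real.norm_eq_abs] using
            norm_integral_le_integral_norm (μ := μ) (f := fun x => f x - f a)
      _ ≤ ∫ x, dist a x ∂μ := by
          refine integral_mono
            ((P1.lip_integrable hf hμ).sub (integrable_const _)).abs (hμ.2 a) fun x => ?_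
          have := hf.dist_le_mul x a
          rw [NNReal.coe_one, one_mul, Real.dist_eq, dist_comm] at this
          exact this
  calc |(∫ x, f x ∂P) - ∫ x, f x ∂Q|
      ≤ |(∫ x, f x ∂P) - f a| + |f a - ∫ x, f x ∂Q| := abs_sub_le _ _ _
    _ = |(∫ x, f x ∂P) - f a| + |(∫ x, f x ∂Q) - f a| := by rw [abs_sub_comm (f a)]
    _ ≤ (∫ x, dist a x ∂P) + ∫ x, dist a x ∂Q := add_le_add (key P hP) (key Q hQ)

lemma Wset_bddAbove (a : S) {P Q : Measure S} (hP : P ∈ P1 S) (hQ : Q ∈ P1 S) :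
    BddAbove {r : ℝ | ∃ f : S → ℝ, LipschitzWith 1 f ∧ r = |(∫ x, f x ∂P) - ∫ x, f x ∂Q|} := by
  refine ⟨(∫ x, dist a x ∂P) + ∫ x, dist a x ∂Q, ?_⟩
  rintro r ⟨f, hf, rfl⟩
  exact abs_integral_sub_le_moments a hf hP hQ

lemma abs_le_W (a : S) {P Q : Measure S} (hP : P ∈ P1 S) (hQ : Q ∈ P1 S)
    {f : S → ℝ} (hf : LipschitzWith 1 f) :
    |(∫ x, f x ∂P) - ∫ x, f x ∂Q| ≤ W P Q :=
  le_csSup (Wset_bddAbove a hP hQ) ⟨f, hf, rfl⟩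

lemma W_nonneg (P Q : Measure S) : 0 ≤ W P Q :=
  Real.sSup_nonneg (by rintro r ⟨f, hf, rfl⟩; exact abs_nonneg _)

lemma W_le_moments (a : S) {P Q : Measure S} (hP : P ∈ P1 S) (hQ : Q ∈ P1 S) :
    W P Q ≤ (∫ x, dist a x ∂P) + ∫ x, dist a x ∂Q := by
  refine csSup_le ⟨_, ⟨fun x => dist a x, LipschitzWith.dist_right a, rfl⟩⟩ ?_
  rintro r ⟨f, hf, rfl⟩
  exact abs_integral_sub_le_moments a hf hP hQ

lemma fR_lip (a : S) (R : ℝ) : LipschitzWith 1 (fun x => max (dist a x - R) 0) := by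
  refine LipschitzWith.of_dist_le_mul fun x y => ?_
  rw [NNReal.coe_one, one_mul, Real.dist_eq]
  calc |max (dist a x - R) 0 - max (dist a y - R) 0|
      ≤ |(dist a x - R) - (dist a y - R)| := abs_max_sub_max_le_abs _ _ _
    _ = |dist a x - dist a y| := by ring_nf
    _ ≤ dist x y := by
        have := abs_dist_sub_le x y a
        rwa [dist_comm x a, dist_comm y a] at this

lemma tendsto_fR (a : S) {Q : Measure S} (hQ : Q ∈ P1 S) :
    Tendsto (fun n : ℕ => ∫ x, max (dist a x - n) 0 ∂Q) atTop (nhds 0) := by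
  have h : Tendsto (fun n : ℕ => ∫ x, max (dist a x - n) 0 ∂Q) atTop
      (nhds (∫ _ : S, (0 : ℝ) ∂Q)) := by
    refine tendsto_integral_of_dominated_convergence (fun x => dist a x)
      (fun n => ((fR_lip a n).continuous).aestronglyMeasurable) (hQ.2 a) (fun n => ?_) ?_
    · filter_upwards with x
      rw [Real.norm_eq_abs, abs_of_nonneg (le_max_right _ _)]
      have : (0:ℝ) ≤ n := Nat.cast_nonneg n
      exact max_le (by linarith) dist_nonneg
    · filter_upwards with x
      refine tendsto_atTop_of_eventually_const (i₀ := ⌈dist a x⌉₊) fun n hn => ?_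
      have : dist a x ≤ n := le_trans (Nat.le_ceil _) (Nat.cast_le.mpr hn)
      exact max_eq_right (by linarith)
  simpa using h

lemma dirac_mem_P1 (a : S) : Measure.dirac a ∈ P1 S := by
  refine ⟨inferInstance, fun b => ?_⟩
  have hm : Measurable fun x : S => dist b x :=
    (Continuous.dist continuous_const continuous_id).measurable
  refine ⟨hm.aestronglyMeasurable, ?_⟩
  rw [HasFiniteIntegral, lintegral_dirac' _ hm.enorm]
  exact enorm_lt_top

end Helpers

/-- For every `Γ ⊆ 𝒫¹(S)`, `μ_UI(Γ) ≤ μ_{H,W}(Γ)`. -/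
theorem muUI_le_muHW
    {S : Type*} [MetricSpace S] [CompleteSpace S] [TopologicalSpace.SeparableSpace S]
    [MeasurableSpace S] [BorelSpace S]
    (Γ : Set (Measure S)) (hΓ : Γ ⊆ P1 S) :
    muUI Γ ≤ muHW Γ := by
  rcases isEmpty_or_nonempty S with hS | hS
  · -- empty space: both quantities are `sInf ∅ = 0`
    have h1 : muUI Γ = 0 := by
      rw [muUI]
      have : {r : ℝ | ∃ a : S, ∃ B : Set S, Bornology.IsBounded B ∧
          r = sSup {s : ℝ | ∃ P ∈ Γ, s = ∫ x in Bᶜ, dist a x ∂P}} = ∅ := by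
        rw [Set.eq_empty_iff_forall_notMem]
        rintro r ⟨a, -⟩
        exact hS.false a
      rw [this, Real.sInf_empty]
    have h2 : muHW Γ = 0 := by
      rw [muHW]
      have : {r : ℝ | ∃ Φ : Finset (Measure S), Φ.Nonempty ∧ ↑Φ ⊆ P1 S ∧
          r = sSup {s : ℝ | ∃ P ∈ Γ, s = sInf {t : ℝ | ∃ Q ∈ Φ, t = W P Q}}} = ∅ := by
        rw [Set.eq_empty_iff_forall_notMem]
        rintro r ⟨Φ, ⟨Q, hQ⟩, hΦ, -⟩
        have hQ1 : IsProbabilityMeasure (Q : Measure S) := (hΦ hQ).1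
        have huniv : (Set.univ : Set S) = ∅ := Set.univ_eq_empty_iff.mpr hS
        have := hQ1.measure_univ
        rw [huniv, measure_empty] at this
        simp at this
      rw [this, Real.sInf_empty]
    rw [h1, h2]
  · obtain ⟨a₀⟩ := hS
    -- bddBelow of the muUI defining set
    have hUIbdd : BddBelow {r : ℝ | ∃ a : S, ∃ B : Set S, Bornology.IsBounded B ∧
        r = sSup {s : ℝ | ∃ P ∈ Γ, s = ∫ x in Bᶜ, dist a x ∂P}} := by
      refine ⟨0, ?_⟩
      rintro r ⟨a, B, hB, rfl⟩
      refine Real.sSup_nonneg ?_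
      rintro s ⟨P, hP, rfl⟩
      exact integral_nonneg fun x => dist_nonneg
    have hA : Set.Nonempty {r : ℝ | ∃ Φ : Finset (Measure S), Φ.Nonempty ∧ ↑Φ ⊆ P1 S ∧
        r = sSup {s : ℝ | ∃ P ∈ Γ, s = sInf {t : ℝ | ∃ Q ∈ Φ, t = W P Q}}} := by
      refine ⟨_, {Measure.dirac a₀}, Finset.singleton_nonempty _, ?_, rfl⟩
      intro Q hQ
      rw [Finset.coe_singleton, Set.mem_singleton_iff] at hQ
      rw [hQ]
      exact dirac_mem_P1 a₀
    rw [muHW]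
    refine le_csInf hA ?_
    rintro r ⟨Φ, hΦne, hΦP1, rfl⟩
    obtain ⟨Q₀, hQ₀⟩ := hΦne
    have hQ₀1 := hΦP1 hQ₀
    set Sig := {s : ℝ | ∃ P ∈ Γ, s = sInf {t : ℝ | ∃ Q ∈ Φ, t = W P Q}} with hSig
    have hfin : ∀ P : Measure S, {t : ℝ | ∃ Q ∈ Φ, t = W P Q}.Finite := by
      intro P
      have : {t : ℝ | ∃ Q ∈ Φ, t = W P Q} = (fun Q => W P Q) '' ↑Φ := by
        ext t; simp [eq_comm]
      rw [this]
      exact Φ.finite_toSet.image _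
    have hWne : ∀ P : Measure S, {t : ℝ | ∃ Q ∈ Φ, t = W P Q}.Nonempty :=
      fun P => ⟨_, Q₀, hQ₀, rfl⟩
    rcases Set.eq_empty_or_nonempty Γ with hΓe | hΓne
    · -- Γ empty: sSup Sig = 0 and 0 belongs to the muUI set
      have hSig0 : sSup Sig = 0 := by
        have : Sig = ∅ := by
          rw [Set.eq_empty_iff_forall_notMem]
          rintro s ⟨P, hP, -⟩
          rw [hΓe] at hP
          exact hP
        rw [this, Real.sSup_empty]
      rw [hSig0, muUI]
      refine csInf_le hUIbdd ⟨a₀, ∅, Bornology.isBounded_empty, ?_⟩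
      have : {s : ℝ | ∃ P ∈ Γ, s = ∫ x in (∅ : Set S)ᶜ, dist a₀ x ∂P} = ∅ := by
        rw [Set.eq_empty_iff_forall_notMem]
        rintro s ⟨P, hP, -⟩
        rw [hΓe] at hP
        exact hP
      rw [this, Real.sSup_empty]
    · by_cases hbdd : BddAbove Sig
      · -- main case
        have hr0 : 0 ≤ sSup Sig := by
          refine Real.sSup_nonneg ?_
          rintro s ⟨P, hP, rfl⟩
          exact Real.sInf_nonneg (by rintro t ⟨Q, hQ, rfl⟩; exact W_nonneg P Q)
        refine le_of_forall_pos_le_add fun ε hε => ?_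
        set r := sSup Sig with hrdef
        set ε' := ε / 2 with hε'def
        have hε' : 0 < ε' := by positivity
        -- choose truncation level N
        have hNex : ∃ N : ℕ, ∀ Q ∈ Φ, ∫ x, max (dist a₀ x - N) 0 ∂Q ≤ ε' := by
          have hev : ∀ᶠ n : ℕ in atTop, ∀ Q ∈ Φ, ∫ x, max (dist a₀ x - n) 0 ∂Q ≤ ε' := by
            rw [eventually_all_finset]
            intro Q hQ
            exact (tendsto_fR a₀ (hΦP1 hQ)).eventually_le_const hε'
          exact hev.exists
        obtain ⟨N, hN⟩ := hNex
        set R := (N : ℝ) with hRdef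
        have hR0 : (0:ℝ) ≤ R := Nat.cast_nonneg N
        obtain ⟨K, hKdef⟩ : ∃ K : ℝ, K = 2 * R * (r + ε') / ε + 1 := ⟨_, rfl⟩
        have hK1 : (0:ℝ) ≤ 2 * R * (r + ε') / ε := by
          apply div_nonneg _ (le_of_lt hε)
          apply mul_nonneg (by linarith) (by linarith)
        have hK0 : 0 < K := by linarith
        have hKR : R * (r + ε') / K ≤ ε / 2 := by
          rw [div_le_iff₀ hK0]
          have hexp : ε / 2 * K = R * (r + ε') + ε / 2 := by
            rw [hKdef]; field_simp
          rw [hexp]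
          linarith
        set B := Metric.closedBall a₀ (R + K) with hBdef
        have hBm : MeasurableSet B := measurableSet_closedBall
        rw [muUI]
        refine le_trans (csInf_le hUIbdd ⟨a₀, B, Metric.isBounded_closedBall, rfl⟩) ?_
        refine csSup_le (by obtain ⟨P, hP⟩ := hΓne; exact ⟨_, P, hP, rfl⟩) ?_
        rintro s ⟨P, hPΓ, rfl⟩
        -- main estimate for a single P ∈ Γ
        have hP1 := hΓ hPΓ
        have : IsProbabilityMeasure P := hP1.1
        have hmem := (hWne P).csInf_mem (hfin P)
        obtain ⟨Q, hQΦ, hWQ⟩ := hmem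
        have hQ1 := hΦP1 hQΦ
        have hWr : W P Q ≤ r := by
          rw [← hWQ]
          exact le_csSup hbdd ⟨P, hPΓ, rfl⟩
        have hintP : Integrable (fun x => max (dist a₀ x - R) 0) P :=
          P1.lip_integrable (fR_lip a₀ R) hP1
        have hintQ : Integrable (fun x => max (dist a₀ x - R) 0) Q :=
          P1.lip_integrable (fR_lip a₀ R) hQ1
        have hdint : Integrable (fun x => dist a₀ x) P := hP1.2 a₀
        have hfRP : ∫ x, max (dist a₀ x - R) 0 ∂P ≤ r + ε' := by
          have h1 : (∫ x, max (dist a₀ x - R) 0 ∂P) - ∫ x, max (dist a₀ x - R) 0 ∂Q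
              ≤ W P Q := le_trans (le_abs_self _) (abs_le_W a₀ hP1 hQ1 (fR_lip a₀ R))
          have h2 := hN Q hQΦ
          linarith
        set I := ∫ x, max (dist a₀ x - R) 0 ∂P with hIdef
        have hI0 : 0 ≤ I := integral_nonneg fun x => le_max_right _ _
        set m := (P Bᶜ).toReal with hmdef
        have hm0 : 0 ≤ m := ENNReal.toReal_nonneg
        -- Step A and B : ∫_{Bᶜ} dist ≤ ∫_{Bᶜ} fR + R * m
        have hstepA : ∫ x in Bᶜ, dist a₀ x ∂P
            ≤ (∫ x in Bᶜ, max (dist a₀ x - R) 0 ∂P) + R * m := by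
          have hsub : ∫ x in Bᶜ, dist a₀ x ∂P
              ≤ ∫ x in Bᶜ, (max (dist a₀ x - R) 0 + R) ∂P := by
            refine setIntegral_mono_on hdint.integrableOn
              (hintP.integrableOn.add (integrable_const R).integrableOn)
              hBm.compl fun x _ => ?_
            have : dist a₀ x - R ≤ max (dist a₀ x - R) 0 := le_max_left _ _
            linarith
          have hsplit : ∫ x in Bᶜ, (max (dist a₀ x - R) 0 + R) ∂P
              = (∫ x in Bᶜ, max (dist a₀ x - R) 0 ∂P) + R * m := by
            rw [integral_add hintP.integrableOn (integrable_const R).integrableOn,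
              setIntegral_const, smul_eq_mul, mul_comm]; rfl
          linarith [hsub, hsplit.le, hsplit.ge]
        -- Step C : ∫_{Bᶜ} fR ≤ I
        have hstepC : ∫ x in Bᶜ, max (dist a₀ x - R) 0 ∂P ≤ I :=
          setIntegral_le_integral hintP
            (Filter.Eventually.of_forall fun x => le_max_right _ _)
        -- Step D (Markov) : K * m ≤ ∫_{Bᶜ} fR
        have hstepD : K * m ≤ ∫ x in Bᶜ, max (dist a₀ x - R) 0 ∂P := by
          have := setIntegral_mono_on (integrable_const K).integrableOn
            hintP.integrableOn hBm.compl (fun x hx => ?_)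
          · rwa [setIntegral_const, smul_eq_mul, mul_comm (P.real Bᶜ) K] at this
          · have hx' : ¬ dist x a₀ ≤ R + K := by
              simpa [hBdef, Metric.mem_closedBall] using hx
            have : R + K < dist a₀ x := by rw [dist_comm]; linarith [lt_of_not_ge hx']
            have : K ≤ dist a₀ x - R := by linarith
            exact le_trans this (le_max_left _ _)
        -- combine
        have hm_le : m ≤ (r + ε') / K := by
          rw [le_div_iff₀ hK0]
          calc m * K = K * m := mul_comm _ _
            _ ≤ ∫ x in Bᶜ, max (dist a₀ x - R) 0 ∂P := hstepD
            _ ≤ I := hstepC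
            _ ≤ r + ε' := hfRP
        have hRm : R * m ≤ ε / 2 := by
          calc R * m ≤ R * ((r + ε') / K) :=
                mul_le_mul_of_nonneg_left hm_le hR0
            _ = R * (r + ε') / K := by ring
            _ ≤ ε / 2 := hKR
        calc ∫ x in Bᶜ, dist a₀ x ∂P
            ≤ (∫ x in Bᶜ, max (dist a₀ x - R) 0 ∂P) + R * m := hstepA
          _ ≤ I + R * m := by linarith
          _ ≤ (r + ε') + ε / 2 := by linarith
          _ = r + ε := by rw [hε'def]; ring
      · -- Sig unbounded: sSup Sig = 0, and the muUI set contains 0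
        have hSig0 : sSup Sig = 0 := Real.sSup_of_not_bddAbove hbdd
        rw [hSig0, muUI]
        refine csInf_le hUIbdd ⟨a₀, ∅, Bornology.isBounded_empty, ?_⟩
        have hT : ¬ BddAbove {s : ℝ | ∃ P ∈ Γ, s = ∫ x in (∅ : Set S)ᶜ, dist a₀ x ∂P} := by
          rintro ⟨M, hM⟩
          apply hbdd
          refine ⟨M + ∫ x, dist a₀ x ∂Q₀, ?_⟩
          rintro s ⟨P, hPΓ, rfl⟩
          have h1 : sInf {t : ℝ | ∃ Q ∈ Φ, t = W P Q} ≤ W P Q₀ :=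
            csInf_le (hfin P).bddBelow ⟨Q₀, hQ₀, rfl⟩
          have h2 : W P Q₀ ≤ (∫ x, dist a₀ x ∂P) + ∫ x, dist a₀ x ∂Q₀ :=
            W_le_moments a₀ (hΓ hPΓ) hQ₀1
          have h3 : ∫ x, dist a₀ x ∂P ≤ M := by
            have hmem : (∫ x in (∅ : Set S)ᶜ, dist a₀ x ∂P)
                ∈ {s : ℝ | ∃ P ∈ Γ, s = ∫ x in (∅ : Set S)ᶜ, dist a₀ x ∂P} :=
              ⟨P, hPΓ, rfl⟩
            have heq : ∫ x in (∅ : Set S)ᶜ, dist a₀ x ∂P = ∫ x, dist a₀ x ∂P := by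
              simp
            have := hM hmem
            rwa [heq] at this
          linarith
        rw [Real.sSup_of_not_bddAbove hT]
end

section
/- Let (P_η)_{η∈D} be a net in 𝒫¹(S) converging weakly to a Borel probability measure P on S, let a ∈ S, let B ⊂ S be a metrically bounded set, and let α > 0 be such that ∫_{S∖B} d(a,·) dP_η ≤ α for every η. Then ∫_S d(a,·) dP ≤ sup_{x∈B} d(a,x) + α; in particular P has a finite first moment, i.e. P ∈ 𝒫¹(S). -/
open MeasureTheory Filter

/-- Let `(P_η)` be a net in `𝒫¹(S)` converging weakly to a Borel probability measure `P`,
`a ∈ S`, `B ⊆ S` metrically bounded, and `α > 0` with `∫_{S∖B} d(a,·) dP_η ≤ α` for every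
`η`. Then `∫ d(a,·) dP ≤ sup_{x ∈ B} d(a,x) + α`; in particular `P` has a finite first
moment. -/
theorem finite_first_moment_of_weak_limit
    {S : Type*} [MetricSpace S] [CompleteSpace S] [TopologicalSpace.SeparableSpace S]
    [MeasurableSpace S] [BorelSpace S]
    {D : Type*} [Preorder D] [IsDirected D (· ≤ ·)] [Nonempty D]
    (Pn : D → Measure S) (hPnprob : ∀ η, IsProbabilityMeasure (Pn η))
    (hPnmom : ∀ η, ∀ b : S, Integrable (fun x => dist b x) (Pn η))
    (P : Measure S) (hPprob : IsProbabilityMeasure P)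
    (hweak : ∀ f : S → ℝ, Continuous f → (∃ C : ℝ, ∀ x : S, |f x| ≤ C) →
      Tendsto (fun η => ∫ x, f x ∂(Pn η)) atTop (nhds (∫ x, f x ∂P)))
    (a : S) (B : Set S) (hB : Bornology.IsBounded B)
    (α : ℝ) (hα : 0 < α)
    (hint : ∀ η, ∫ x in Bᶜ, dist a x ∂(Pn η) ≤ α) :
    Integrable (fun x => dist a x) P ∧
      ∫ x, dist a x ∂P ≤ sSup ((fun x => dist a x) '' B) + α := by
  classical
  set M : ℝ := sSup ((fun x => dist a x) '' B) with hM
  -- M is an upper bound on dist a over B, and M ≥ 0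
  have hBdd : BddAbove ((fun x => dist a x) '' B) := by
    obtain ⟨r, hr⟩ := hB.subset_closedBall a
    refine ⟨r, ?_⟩
    rintro y ⟨x, hx, rfl⟩
    have := hr hx
    simpa [Metric.mem_closedBall, dist_comm] using this
  have hMub : ∀ x ∈ B, dist a x ≤ M := fun x hx => le_csSup hBdd ⟨x, hx, rfl⟩
  have hM0 : 0 ≤ M := by
    rcases Set.eq_empty_or_nonempty B with hBe | ⟨x, hx⟩
    · simp [hM, hBe, Real.sSup_empty]
    · exact le_trans dist_nonneg (hMub x hx)
  set K : Set S := Metric.closedBall a M with hK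
  have hKmeas : MeasurableSet K := Metric.isClosed_closedBall.measurableSet
  have hBK : B ⊆ K := fun x hx => by
    simpa [hK, Metric.mem_closedBall, dist_comm] using hMub x hx
  -- truncations
  set g : ℕ → S → ℝ := fun N x => min (dist a x) N with hg
  have hgcont : ∀ N, Continuous (g N) :=
    fun N => (Continuous.dist continuous_const continuous_id).min continuous_const
  have hg0 : ∀ N x, 0 ≤ g N x := fun N x => le_min dist_nonneg (Nat.cast_nonneg N)
  have hgle : ∀ N x, g N x ≤ dist a x := fun N x => min_le_left _ _
  have hgbd : ∀ N x, |g N x| ≤ (N : ℝ) := fun N x => by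
    rw [abs_of_nonneg (hg0 N x)]; exact min_le_right _ _
  have hgint : ∀ N, ∀ (μ : Measure S), Integrable (fun x => dist a x) μ →
      Integrable (g N) μ := fun N μ hμ =>
    hμ.mono ((hgcont N).aestronglyMeasurable)
      (Filter.Eventually.of_forall fun x => by
        rw [Real.norm_eq_abs, abs_of_nonneg (hg0 N x), Real.norm_eq_abs,
          abs_of_nonneg dist_nonneg]
        exact hgle N x)
  -- bound ∫ g N ∂(Pn η) ≤ M + α
  have hbound : ∀ N η, ∫ x, g N x ∂(Pn η) ≤ M + α := by
    intro N η
    have hdint := hPnmom η a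
    have hgη := hgint N (Pn η) hdint
    have hsplit : ∫ x, g N x ∂(Pn η)
        = (∫ x in K, g N x ∂(Pn η)) + ∫ x in Kᶜ, g N x ∂(Pn η) :=
      (integral_add_compl hKmeas hgη).symm
    have h1 : ∫ x in K, g N x ∂(Pn η) ≤ M := by
      have : ∫ x in K, g N x ∂(Pn η) ≤ ∫ x in K, M ∂(Pn η) := by
        refine setIntegral_mono_on hgη.integrableOn (integrable_const M).integrableOn
          hKmeas fun x hx => ?_
        exact le_trans (hgle N x) (by simpa [hK, Metric.mem_closedBall, dist_comm] using hx)
      have := hPnprob η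
      calc ∫ x in K, g N x ∂(Pn η) ≤ ∫ x in K, M ∂(Pn η) := ‹_›
        _ = ((Pn η) K).toReal * M := by rw [setIntegral_const, smul_eq_mul, measureReal_def]
        _ ≤ 1 * M := by
            refine mul_le_mul_of_nonneg_right ?_ hM0
            have : (Pn η) K ≤ 1 := prob_le_one
            exact_mod_cast ENNReal.toReal_le_of_le_ofReal zero_le_one (by simpa using this)
        _ = M := one_mul M
    have h2 : ∫ x in Kᶜ, g N x ∂(Pn η) ≤ α := by
      have h21 : ∫ x in Kᶜ, g N x ∂(Pn η) ≤ ∫ x in Kᶜ, dist a x ∂(Pn η) :=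
        setIntegral_mono hgη.integrableOn hdint.integrableOn (hgle N)
      have h22 : ∫ x in Kᶜ, dist a x ∂(Pn η) ≤ ∫ x in Bᶜ, dist a x ∂(Pn η) := by
        refine setIntegral_mono_set hdint.integrableOn
          (Filter.Eventually.of_forall fun x => dist_nonneg)
          (Filter.Eventually.of_forall ?_)
        exact Set.compl_subset_compl.mpr hBK
      exact le_trans h21 (le_trans h22 (hint η))
    linarith [hsplit, h1, h2]
  -- pass to the limit: ∫ g N ∂P ≤ M + α
  have hlim : ∀ N, ∫ x, g N x ∂P ≤ M + α := by
    intro N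
    have ht := hweak (g N) (hgcont N) ⟨N, hgbd N⟩
    exact le_of_tendsto ht (Filter.Eventually.of_forall fun η => hbound N η)
  -- integrability of dist a
  have hmeasd : AEStronglyMeasurable (fun x => dist a x) P :=
    (Continuous.dist continuous_const continuous_id).aestronglyMeasurable
  have hPint : Integrable (fun x => dist a x) P := by
    refine ⟨hmeasd, ?_⟩
    rw [hasFiniteIntegral_iff_norm]
    have hpt : ∀ x, (⨆ N : ℕ, ENNReal.ofReal (g N x)) = ENNReal.ofReal (dist a x) := by
      intro x
      refine le_antisymm (iSup_le fun N => ENNReal.ofReal_le_ofReal (hgle N x)) ?_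
      refine le_iSup_of_le ⌈dist a x⌉₊ (le_of_eq ?_)
      congr 1
      exact (min_eq_left (Nat.le_ceil _)).symm
    have hmono : Monotone fun N : ℕ => fun x => ENNReal.ofReal (g N x) := by
      intro m n hmn
      exact fun x => ENNReal.ofReal_le_ofReal
        (min_le_min le_rfl (by exact_mod_cast hmn))
    have hsup : ∫⁻ x, ENNReal.ofReal (dist a x) ∂P
        = ⨆ N : ℕ, ∫⁻ x, ENNReal.ofReal (g N x) ∂P := by
      rw [← lintegral_iSup (fun N => ((hgcont N).measurable).ennreal_ofReal) hmono]
      congr 1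
      funext x
      exact (hpt x).symm
    have hfin : ∀ N : ℕ, ∫⁻ x, ENNReal.ofReal (g N x) ∂P ≤ ENNReal.ofReal (M + α) := by
      intro N
      have hgP : Integrable (g N) P := by
        have := hPprob
        exact (integrable_const (N : ℝ)).mono ((hgcont N).aestronglyMeasurable)
          (Filter.Eventually.of_forall fun x => by
            simpa [Real.norm_eq_abs, abs_of_nonneg (Nat.cast_nonneg (α := ℝ) N)] using hgbd N x)
      rw [← ofReal_integral_eq_lintegral_ofReal hgP
        (Filter.Eventually.of_forall (hg0 N))]
      exact ENNReal.ofReal_le_ofReal (hlim N)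
    have : ∫⁻ x, ENNReal.ofReal ‖dist a x‖ ∂P ≤ ENNReal.ofReal (M + α) := by
      have heq : (fun x => ENNReal.ofReal ‖dist a x‖)
          = fun x => ENNReal.ofReal (dist a x) := by
        funext x; rw [Real.norm_eq_abs, abs_of_nonneg dist_nonneg]
      rw [heq, hsup]
      exact iSup_le hfin
    exact lt_of_le_of_lt this ENNReal.ofReal_lt_top
  refine ⟨hPint, ?_⟩
  -- monotone convergence of integrals
  have htend : Tendsto (fun N : ℕ => ∫ x, g N x ∂P) atTop (nhds (∫ x, dist a x ∂P)) := by
    refine tendsto_integral_of_dominated_convergence (fun x => dist a x)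
      (fun N => (hgcont N).aestronglyMeasurable) hPint
      (fun N => Filter.Eventually.of_forall fun x => by
        rw [Real.norm_eq_abs, abs_of_nonneg (hg0 N x)]; exact hgle N x)
      (Filter.Eventually.of_forall fun x => ?_)
    have : ∀ᶠ N : ℕ in atTop, g N x = dist a x := by
      filter_upwards [eventually_ge_atTop ⌈dist a x⌉₊] with N hN
      exact min_eq_left (le_trans (Nat.le_ceil _) (by exact_mod_cast hN))
    exact Tendsto.congr' (this.mono fun N h => h.symm) tendsto_const_nhds
  exact le_of_tendsto htend (Filter.Eventually.of_forall hlim)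
end

section
/- Let (P_η)_{η∈D} be a net in 𝒫¹(S) converging weakly to P ∈ 𝒫¹(S), let a ∈ S, let B ⊂ S be a metrically bounded set, and let α > 0 be such that ∫_{S∖B} d(a,·) dP_η < α for every η. Then for every 1-Lipschitz f : S → ℝ with f(a) = 0, limsup_η ∫ f dP_η ≤ ∫ f dP + α. -/
open MeasureTheory Filter

/-- Let `(P_η)` be a net in `𝒫¹(S)` converging weakly to `P ∈ 𝒫¹(S)`, `a ∈ S`, `B ⊆ S`
metrically bounded, and `α > 0` with `∫_{S∖B} d(a,·) dP_η < α` for every `η`. Then for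
every 1-Lipschitz `f : S → ℝ` with `f a = 0`,
`limsup_η ∫ f dP_η ≤ ∫ f dP + α`. -/
theorem limsup_integral_le_of_weak_limit
    {S : Type*} [MetricSpace S] [CompleteSpace S] [TopologicalSpace.SeparableSpace S]
    [MeasurableSpace S] [BorelSpace S]
    {D : Type*} [Preorder D] [IsDirected D (· ≤ ·)] [Nonempty D]
    (Pn : D → Measure S) (hPnprob : ∀ η, IsProbabilityMeasure (Pn η))
    (hPnmom : ∀ η, ∀ b : S, Integrable (fun x => dist b x) (Pn η))
    (P : Measure S) (hPprob : IsProbabilityMeasure P)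
    (hPmom : ∀ b : S, Integrable (fun x => dist b x) P)
    (hweak : ∀ f : S → ℝ, Continuous f → (∃ C : ℝ, ∀ x : S, |f x| ≤ C) →
      Tendsto (fun η => ∫ x, f x ∂(Pn η)) atTop (nhds (∫ x, f x ∂P)))
    (a : S) (B : Set S) (hB : Bornology.IsBounded B)
    (α : ℝ) (hα : 0 < α)
    (hint : ∀ η, ∫ x in Bᶜ, dist a x ∂(Pn η) < α) :
    ∀ f : S → ℝ, LipschitzWith 1 f → f a = 0 →
      limsup (fun η => ∫ x, f x ∂(Pn η)) atTop ≤ (∫ x, f x ∂P) + α := by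
  intro f hf hfa
  obtain ⟨r, hr⟩ := hB.subset_closedBall a
  set M : ℝ := max r 0 with hMdef
  have hM0 : 0 ≤ M := le_max_right _ _
  have hMB : ∀ x ∈ B, dist a x ≤ M := by
    intro x hx
    have h1 : dist x a ≤ r := Metric.mem_closedBall.mp (hr hx)
    rw [dist_comm]
    exact h1.trans (le_max_left _ _)
  -- |f x| ≤ dist a x
  have hfd : ∀ x, |f x| ≤ dist a x := by
    intro x
    have h1 := hf.dist_le_mul x a
    rw [Real.dist_eq, hfa, sub_zero, NNReal.coe_one, one_mul, dist_comm] at h1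
    exact h1
  have hfcont : Continuous f := hf.continuous
  -- integrability of f
  have hfint : ∀ (μ : Measure S), Integrable (fun x => dist a x) μ → Integrable f μ := by
    intro μ hμ
    refine hμ.mono hfcont.aestronglyMeasurable (ae_of_all _ fun x => ?_)
    rw [Real.norm_eq_abs, Real.norm_eq_abs]
    exact (hfd x).trans (le_abs_self _)
  -- the "bad" set A for the upper truncation
  set A : Set S := {x | M < dist a x} with hAdef
  have hA : MeasurableSet A :=
    measurableSet_lt measurable_const (continuous_const.dist continuous_id).measurable
  have hAB : A ⊆ Bᶜ := fun x hx hxB => absurd (hMB x hxB) (not_le.mpr hx)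
  -- the indicator integral over A is < α for every η
  have hindlt : ∀ η, ∫ x, A.indicator (fun y => dist a y) x ∂(Pn η) < α := by
    intro η
    rw [integral_indicator hA]
    refine lt_of_le_of_lt ?_ (hint η)
    exact setIntegral_mono_set ((hPnmom η a).integrableOn)
      (ae_of_all _ fun x => dist_nonneg) (HasSubset.Subset.eventuallyLE hAB)
  -- truncated functions
  set g : ℕ → S → ℝ := fun m x => max (min (f x) M) (-(m : ℝ)) with hgdef
  have hgcont : ∀ m, Continuous (g m) :=
    fun m => (hfcont.min continuous_const).max continuous_const
  have hgbd : ∀ m x, |g m x| ≤ max M (m : ℝ) := by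
    intro m x
    rw [abs_le]
    constructor
    · exact le_trans (neg_le_neg (le_max_right M _)) (le_max_right _ _)
    · exact max_le ((min_le_right _ _).trans (le_max_left _ _))
        ((neg_nonpos.mpr (Nat.cast_nonneg m)).trans (le_max_left 0 _ |>.trans
          (max_le_max hM0 le_rfl)))
  have hgint : ∀ m (μ : Measure S) [IsProbabilityMeasure μ], Integrable (g m) μ := by
    intro m μ _
    refine (integrable_const (max M (m : ℝ))).mono' (hgcont m).aestronglyMeasurable
      (ae_of_all _ fun x => ?_)
    rw [Real.norm_eq_abs]
    exact hgbd m x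
  -- indicator integrability
  have hindint : ∀ (μ : Measure S), Integrable (fun x => dist a x) μ →
      Integrable (A.indicator (fun y => dist a y)) μ :=
    fun μ hμ => hμ.indicator hA
  -- pointwise upper bound: f ≤ g m + indicator
  have hkey : ∀ m x, f x ≤ g m x + A.indicator (fun y => dist a y) x := by
    intro m x
    by_cases hx : f x ≤ M
    · have h1 : g m x = max (f x) (-(m : ℝ)) := by rw [hgdef]; simp [min_eq_left hx]
      have h2 : (0:ℝ) ≤ A.indicator (fun y => dist a y) x :=
        Set.indicator_nonneg (fun y _ => dist_nonneg) x
      calc f x ≤ max (f x) (-(m : ℝ)) := le_max_left _ _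
        _ = g m x := h1.symm
        _ ≤ g m x + _ := le_add_of_nonneg_right h2
    · push_neg at hx
      have hxA : x ∈ A := by
        rw [hAdef]
        exact lt_of_lt_of_le hx ((le_abs_self _).trans (hfd x))
      have h1 : g m x = M := by
        rw [hgdef]
        simp only [min_eq_right hx.le]
        exact max_eq_left ((neg_nonpos.mpr (Nat.cast_nonneg m)).trans hM0)
      rw [Set.indicator_of_mem hxA, h1]
      calc f x ≤ dist a x := (le_abs_self _).trans (hfd x)
        _ ≤ M + dist a x := le_add_of_nonneg_left hM0
  -- per-η inequality: ∫ f ∂Pn η ≤ ∫ g m ∂Pn η + α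
  have hstep : ∀ m η, ∫ x, f x ∂(Pn η) ≤ ∫ x, g m x ∂(Pn η) + α := by
    intro m η
    have := hPnprob η
    have h1 : ∫ x, f x ∂(Pn η) ≤
        ∫ x, (g m x + A.indicator (fun y => dist a y) x) ∂(Pn η) :=
      integral_mono (hfint _ (hPnmom η a))
        ((hgint m (Pn η)).add (hindint _ (hPnmom η a))) (hkey m)
    rw [integral_add (hgint m (Pn η)) (hindint _ (hPnmom η a))] at h1
    exact h1.trans (add_le_add_right (hindlt η).le _)
  -- lower bound for coboundedness
  have hlow : ∀ η, -(M + α) ≤ ∫ x, f x ∂(Pn η) := by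
    intro η
    have := hPnprob η
    have h1 : ∀ x, -M - A.indicator (fun y => dist a y) x ≤ f x := by
      intro x
      by_cases hx : x ∈ A
      · rw [Set.indicator_of_mem hx]
        have h2 : -(dist a x) ≤ f x := neg_le_of_abs_le (hfd x)
        have : -M - dist a x ≤ -(dist a x) := by linarith
        linarith
      · rw [Set.indicator_of_notMem hx, sub_zero]
        have hx' : dist a x ≤ M := not_lt.mp hx
        have h2 : -(dist a x) ≤ f x := neg_le_of_abs_le (hfd x)
        linarith
    have h2 : ∫ x, (-M - A.indicator (fun y => dist a y) x) ∂(Pn η) ≤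
        ∫ x, f x ∂(Pn η) :=
      integral_mono ((integrable_const (-M)).sub (hindint _ (hPnmom η a)))
        (hfint _ (hPnmom η a)) h1
    rw [integral_sub (integrable_const _) (hindint _ (hPnmom η a)),
      integral_const, probReal_univ, one_smul] at h2
    have h3 := (hindlt η).le
    linarith
  have hcobdd : IsCoboundedUnder (· ≤ ·) (atTop : Filter D)
      (fun η => ∫ x, f x ∂(Pn η)) :=
    IsCoboundedUnder.of_frequently_ge (Frequently.of_forall hlow)
  -- limsup bound for each m
  have hlimsup : ∀ m : ℕ, limsup (fun η => ∫ x, f x ∂(Pn η)) atTop ≤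
      ∫ x, g m x ∂P + α := by
    intro m
    have hv := hweak (g m) (hgcont m) ⟨max M (m : ℝ), hgbd m⟩
    have hva : Tendsto (fun η => ∫ x, g m x ∂(Pn η) + α) atTop
        (nhds (∫ x, g m x ∂P + α)) := hv.add_const α
    calc limsup (fun η => ∫ x, f x ∂(Pn η)) atTop
        ≤ limsup (fun η => ∫ x, g m x ∂(Pn η) + α) atTop :=
          limsup_le_limsup (Eventually.of_forall (hstep m)) hcobdd
            hva.isBoundedUnder_le
      _ = ∫ x, g m x ∂P + α := hva.limsup_eq
  -- lower truncation sets
  set C : ℕ → Set S := fun m => {x | (m : ℝ) ≤ dist a x} with hCdef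
  have hC : ∀ m, MeasurableSet (C m) :=
    fun m => measurableSet_le measurable_const
      (continuous_const.dist continuous_id).measurable
  -- ∫ g m ∂P ≤ ∫ f ∂P + ∫ (C m).indicator dist ∂P
  have hgle : ∀ m, ∫ x, g m x ∂P ≤
      ∫ x, f x ∂P + ∫ x, (C m).indicator (fun y => dist a y) x ∂P := by
    intro m
    have h1 : ∀ x, g m x ≤ f x + (C m).indicator (fun y => dist a y) x := by
      intro x
      by_cases hx : -(m : ℝ) ≤ f x
      · have : g m x ≤ f x := by
          rw [hgdef]
          exact max_le (min_le_left _ _) hx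
        exact this.trans (le_add_of_nonneg_right
          (Set.indicator_nonneg (fun y _ => dist_nonneg) x))
      · push_neg at hx
        have hxC : x ∈ C m := by
          rw [hCdef]
          have : (m : ℝ) < -(f x) := by linarith
          exact (this.le.trans ((neg_le_abs _).trans (hfd x)))
        rw [Set.indicator_of_mem hxC]
        have h2 : g m x = -(m : ℝ) := by
          have hfM : min (f x) M = f x :=
            min_eq_left (hx.le.trans ((neg_nonpos.mpr (Nat.cast_nonneg m)).trans hM0))
          show max (min (f x) M) (-(m : ℝ)) = -(m : ℝ)
          rw [hfM]
          exact max_eq_right hx.le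
        rw [h2]
        have h3 : -(dist a x) ≤ f x := neg_le_of_abs_le (hfd x)
        have h4 : (0:ℝ) ≤ (m : ℝ) := Nat.cast_nonneg m
        linarith
    have h2 : ∫ x, g m x ∂P ≤
        ∫ x, (f x + (C m).indicator (fun y => dist a y) x) ∂P :=
      integral_mono (hgint m P) ((hfint P (hPmom a)).add ((hPmom a).indicator (hC m))) h1
    rwa [integral_add (hfint P (hPmom a)) ((hPmom a).indicator (hC m))] at h2
  -- the tail integrals tend to 0
  have htail : Tendsto (fun m : ℕ => ∫ x, (C m).indicator (fun y => dist a y) x ∂P)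
      atTop (nhds 0) := by
    have h0 : (0:ℝ) = ∫ x, (0:ℝ) ∂P := by rw [integral_zero]
    rw [h0]
    refine tendsto_integral_of_dominated_convergence (fun x => dist a x)
      (fun m => ((hPmom a).aestronglyMeasurable).indicator (hC m))
      (hPmom a) (fun m => ae_of_all _ fun x => ?_) (ae_of_all _ fun x => ?_)
    · by_cases hx : x ∈ C m
      · simp [hx, Real.norm_eq_abs, abs_of_nonneg dist_nonneg]
      · simp [hx, Real.norm_eq_abs, dist_nonneg]
    · obtain ⟨N, hN⟩ := exists_nat_gt (dist a x)
      refine tendsto_const_nhds.congr' ?_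
      filter_upwards [eventually_ge_atTop N] with m hm
      have hxC : x ∉ C m := by
        rw [hCdef]
        simp only [Set.mem_setOf_eq, not_le]
        exact lt_of_lt_of_le hN (Nat.cast_le.mpr hm)
      rw [Set.indicator_of_notMem hxC]
  -- conclude
  have hfinal : Tendsto (fun m : ℕ => ∫ x, f x ∂P +
      ∫ x, (C m).indicator (fun y => dist a y) x ∂P + α) atTop
      (nhds (∫ x, f x ∂P + 0 + α)) :=
    ((tendsto_const_nhds.add htail).add_const α)
  have h := ge_of_tendsto' hfinal (fun m =>
    (hlimsup m).trans (add_le_add_left (hgle m) α))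
  rwa [add_zero] at h
end
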